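/- Let P be a finite set of points in ℝ^d, ω : P → [0,∞) a weight assignment, and p ∈ P a point whose weighted Voronoi cell Vor_ω(p) is bounded. Then every simplex σ ∈ Del_ω(P) containing p is a face of a simplex σ' ∈ Del_ω(P) (with p ∈ σ' and σ ⊆ σ') whose affine hull has dimension d. -/

import Mathlib

noncomputable section

/-- Weighted Voronoi cell of `p` among the points of `P`. -/
def vorCell {d : ℕ} (P : Finset (EuclideanSpace ℝ (Fin d))) (ω : EuclideanSpace ℝ (Fin d) → ℝ)
    (p : EuclideanSpace ℝ (Fin d)) : Set (EuclideanSpace ℝ (Fin d)) :=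
  {x | ∀ q ∈ P, ‖x - p‖ ^ 2 - ω p ^ 2 ≤ ‖x - q‖ ^ 2 - ω q ^ 2}

/-- Weighted Voronoi face of a simplex `σ`. -/
def vorFace {d : ℕ} (P : Finset (EuclideanSpace ℝ (Fin d))) (ω : EuclideanSpace ℝ (Fin d) → ℝ)
    (σ : Finset (EuclideanSpace ℝ (Fin d))) : Set (EuclideanSpace ℝ (Fin d)) :=
  ⋂ p ∈ σ, vorCell P ω p

open RealInnerProductSpace Finset Module

variable {d : ℕ}

/-- The set of points of `P` whose power distance to `x` equals that of `p`. -/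
def eqSet (P : Finset (EuclideanSpace ℝ (Fin d))) (ω : EuclideanSpace ℝ (Fin d) → ℝ)
    (p x : EuclideanSpace ℝ (Fin d)) : Finset (EuclideanSpace ℝ (Fin d)) :=
  P.filter (fun q => ‖x - q‖ ^ 2 - ω q ^ 2 = ‖x - p‖ ^ 2 - ω p ^ 2)

lemma shift_key (q p x v : EuclideanSpace ℝ (Fin d)) (t : ℝ) (ω : EuclideanSpace ℝ (Fin d) → ℝ) :
    (‖(x + t • v) - q‖ ^ 2 - ω q ^ 2) - (‖(x + t • v) - p‖ ^ 2 - ω p ^ 2)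
      = (‖x - q‖ ^ 2 - ω q ^ 2) - (‖x - p‖ ^ 2 - ω p ^ 2) - 2 * t * ⟪q - p, v⟫ := by
  have hq : (x + t • v) - q = (x - q) + t • v := by abel
  have hp : (x + t • v) - p = (x - p) + t • v := by abel
  rw [hq, hp, norm_add_sq_real, norm_add_sq_real, real_inner_smul_right, real_inner_smul_right]
  have h1 : ⟪x - q, v⟫ - ⟪x - p, v⟫ = -⟪q - p, v⟫ := by
    rw [← inner_sub_left, ← inner_neg_left]; congr 1; abel
  linear_combination (2*t) * h1

lemma p_mem_eqSet {P : Finset (EuclideanSpace ℝ (Fin d))} {ω : EuclideanSpace ℝ (Fin d) → ℝ}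
    {p : EuclideanSpace ℝ (Fin d)} (hp : p ∈ P) (x : EuclideanSpace ℝ (Fin d)) :
    p ∈ eqSet P ω p x := by
  simp [eqSet, hp]

lemma mem_vorFace_eqSet {P : Finset (EuclideanSpace ℝ (Fin d))} {ω : EuclideanSpace ℝ (Fin d) → ℝ}
    {p x : EuclideanSpace ℝ (Fin d)} (hx : x ∈ vorCell P ω p) :
    x ∈ vorFace P ω (eqSet P ω p x) := by
  simp only [vorFace, Set.mem_iInter]
  intro q hq
  simp only [eqSet, mem_filter] at hq
  intro r hr
  rw [hq.2]
  exact hx r hr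

/-- The key step lemma: if the equality set doesn't span everything, we can move to a point
with a strictly bigger equality-set span. -/
lemma step_lemma {P : Finset (EuclideanSpace ℝ (Fin d))} {ω : EuclideanSpace ℝ (Fin d) → ℝ}
    {p : EuclideanSpace ℝ (Fin d)} (hp : p ∈ P)
    (hbdd : Bornology.IsBounded (vorCell P ω p))
    {x : EuclideanSpace ℝ (Fin d)} (hx : x ∈ vorCell P ω p)
    (hlt : finrank ℝ (vectorSpan ℝ ((eqSet P ω p x : Finset (EuclideanSpace ℝ (Fin d))) :
      Set (EuclideanSpace ℝ (Fin d)))) < d) :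
    ∃ x' : EuclideanSpace ℝ (Fin d), x' ∈ vorCell P ω p ∧
      eqSet P ω p x ⊆ eqSet P ω p x' ∧
      finrank ℝ (vectorSpan ℝ ((eqSet P ω p x : Finset _) : Set (EuclideanSpace ℝ (Fin d)))) <
        finrank ℝ (vectorSpan ℝ ((eqSet P ω p x' : Finset _) : Set (EuclideanSpace ℝ (Fin d)))) := by
  classical
  set K := vectorSpan ℝ ((eqSet P ω p x : Finset _) : Set (EuclideanSpace ℝ (Fin d))) with hK
  -- find v ≠ 0 orthogonal to K
  have hKtop : K ≠ ⊤ := by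
    intro h
    rw [h] at hlt
    simp [finrank_top, finrank_euclideanSpace_fin] at hlt
  have hbot : Kᗮ ≠ ⊥ := by
    intro h
    exact hKtop (Submodule.orthogonal_eq_bot_iff.mp h)
  obtain ⟨v, hvK, hv0⟩ := Submodule.exists_mem_ne_zero_of_ne_bot hbot
  -- c q = ⟪q - p, v⟫ vanishes on eqSet
  have hc0 : ∀ q ∈ eqSet P ω p x, ⟪q - p, v⟫ = 0 := by
    intro q hq
    have hqp : q - p ∈ K := by
      have := vsub_mem_vectorSpan ℝ (Finset.mem_coe.mpr hq)
        (Finset.mem_coe.mpr (p_mem_eqSet hp x))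
      simpa [hK] using this
    exact (Submodule.mem_orthogonal K v).mp hvK (q - p) hqp
  -- the set of q with positive c q is nonempty (else vorCell unbounded)
  have hQ : (P.filter (fun q => 0 < ⟪q - p, v⟫)).Nonempty := by
    by_contra hemp
    rw [Finset.not_nonempty_iff_eq_empty, Finset.filter_eq_empty_iff] at hemp
    -- then the whole ray is in the cell
    have hray : ∀ t : ℝ, 0 ≤ t → x + t • v ∈ vorCell P ω p := by
      intro t ht q hq
      have h1 := shift_key q p x v t ω
      have h2 : ⟪q - p, v⟫ ≤ 0 := le_of_not_gt (hemp hq)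
      have h3 : 0 ≤ (‖x - q‖ ^ 2 - ω q ^ 2) - (‖x - p‖ ^ 2 - ω p ^ 2) := by
        have := hx q hq; linarith
      nlinarith
    obtain ⟨C, hC⟩ := hbdd.exists_norm_le
    have hvpos : 0 < ‖v‖ := norm_pos_iff.mpr hv0
    set t : ℝ := (|C| + ‖x‖ + 1) / ‖v‖ with htdef
    have ht0 : 0 ≤ t := by positivity
    have hmem := hray t ht0
    have hle := hC _ hmem
    have h4 : ‖t • v‖ ≤ ‖x + t • v‖ + ‖x‖ := by
      calc ‖t • v‖ = ‖(x + t • v) - x‖ := by congr 1; abel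
        _ ≤ ‖x + t • v‖ + ‖x‖ := norm_sub_le _ _
    rw [norm_smul, Real.norm_of_nonneg ht0] at h4
    have h5 : t * ‖v‖ = |C| + ‖x‖ + 1 := by
      rw [htdef, div_mul_cancel₀ _ (ne_of_gt hvpos)]
    have h6 : C ≤ |C| := le_abs_self C
    nlinarith
  -- define t* as the min over this set
  set f : EuclideanSpace ℝ (Fin d) → ℝ :=
    fun q => ((‖x - q‖ ^ 2 - ω q ^ 2) - (‖x - p‖ ^ 2 - ω p ^ 2)) / (2 * ⟪q - p, v⟫) with hf
  set t : ℝ := (P.filter (fun q => 0 < ⟪q - p, v⟫)).inf' hQ f with htdef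
  have ht0 : 0 ≤ t := by
    rw [htdef]
    apply Finset.le_inf'
    intro q hq
    rw [Finset.mem_filter] at hq
    have h3 : 0 ≤ (‖x - q‖ ^ 2 - ω q ^ 2) - (‖x - p‖ ^ 2 - ω p ^ 2) := by
      have := hx q hq.1; linarith
    exact div_nonneg h3 (by linarith [hq.2])
  refine ⟨x + t • v, ?_, ?_, ?_⟩
  · -- membership in vorCell
    intro q hq
    have h1 := shift_key q p x v t ω
    have h3 : 0 ≤ (‖x - q‖ ^ 2 - ω q ^ 2) - (‖x - p‖ ^ 2 - ω p ^ 2) := by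
      have := hx q hq; linarith
    by_cases hcq : 0 < ⟪q - p, v⟫
    · have hqf : t ≤ f q := Finset.inf'_le f (Finset.mem_filter.mpr ⟨hq, hcq⟩)
      have : t * (2 * ⟪q - p, v⟫) ≤ (‖x - q‖ ^ 2 - ω q ^ 2) - (‖x - p‖ ^ 2 - ω p ^ 2) := by
        rw [hf] at hqf
        calc t * (2 * ⟪q - p, v⟫) ≤ _ / (2 * ⟪q - p, v⟫) * (2 * ⟪q - p, v⟫) := by
              apply mul_le_mul_of_nonneg_right hqf (by linarith)
          _ = _ := div_mul_cancel₀ _ (by positivity)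
      linarith
    · push_neg at hcq
      nlinarith
  · -- eqSet grows
    intro q hq
    have hq' := hq
    rw [eqSet, Finset.mem_filter] at hq'
    rw [eqSet, Finset.mem_filter]
    refine ⟨hq'.1, ?_⟩
    have h1 := shift_key q p x v t ω
    rw [hc0 q hq] at h1
    linarith [hq'.2]
  · -- rank increases
    obtain ⟨q₀, hq₀mem, hq₀⟩ := Finset.exists_mem_eq_inf' hQ f
    rw [Finset.mem_filter] at hq₀mem
    have hq₀P := hq₀mem.1
    have hq₀c := hq₀mem.2
    -- q₀ is in the new eqSet
    have hq₀new : q₀ ∈ eqSet P ω p (x + t • v) := by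
      rw [eqSet, Finset.mem_filter]
      refine ⟨hq₀P, ?_⟩
      have h1 := shift_key q₀ p x v t ω
      obtain ⟨c, hc⟩ : ∃ c : ℝ, ⟪q₀ - p, v⟫ = c := ⟨_, rfl⟩
      rw [hc] at h1 hq₀c
      have hcne : c ≠ 0 := ne_of_gt hq₀c
      have ht : t = ((‖x - q₀‖ ^ 2 - ω q₀ ^ 2) - (‖x - p‖ ^ 2 - ω p ^ 2)) / (2 * c) := by
        rw [htdef, hq₀, hf]; simp only []; rw [hc]
      have h2 : 2 * t * c =
          (‖x - q₀‖ ^ 2 - ω q₀ ^ 2) - (‖x - p‖ ^ 2 - ω p ^ 2) := by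
        rw [ht]; field_simp
      linarith
    -- q₀ not in old span
    have hq₀old : q₀ - p ∉ K := by
      intro hmem
      have := (Submodule.mem_orthogonal K v).mp hvK (q₀ - p) hmem
      rw [this] at hq₀c
      exact lt_irrefl 0 hq₀c
    -- eqSet x ⊆ eqSet x' (reprove locally)
    have hsub : eqSet P ω p x ⊆ eqSet P ω p (x + t • v) := by
      intro q hq
      have hq' := hq
      rw [eqSet, Finset.mem_filter] at hq'
      rw [eqSet, Finset.mem_filter]
      refine ⟨hq'.1, ?_⟩
      have h1 := shift_key q p x v t ω
      rw [hc0 q hq] at h1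
      linarith [hq'.2]
    have hKle : K ≤ vectorSpan ℝ ((eqSet P ω p (x + t • v) : Finset _) :
        Set (EuclideanSpace ℝ (Fin d))) := by
      rw [hK]
      exact vectorSpan_mono ℝ (Finset.coe_subset.mpr hsub)
    have hmem' : q₀ - p ∈ vectorSpan ℝ ((eqSet P ω p (x + t • v) : Finset _) :
        Set (EuclideanSpace ℝ (Fin d))) := by
      have := vsub_mem_vectorSpan ℝ (Finset.mem_coe.mpr hq₀new)
        (Finset.mem_coe.mpr (hsub (p_mem_eqSet hp x)))
      simpa using this
    exact Submodule.finrank_lt_finrank_of_lt (lt_of_le_of_ne hKle (by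
      intro h
      exact hq₀old (h ▸ hmem')))

lemma reach_full {P : Finset (EuclideanSpace ℝ (Fin d))} {ω : EuclideanSpace ℝ (Fin d) → ℝ}
    {p : EuclideanSpace ℝ (Fin d)} (hp : p ∈ P)
    (hbdd : Bornology.IsBounded (vorCell P ω p)) :
    ∀ n : ℕ, ∀ x ∈ vorCell P ω p,
      d - finrank ℝ (vectorSpan ℝ ((eqSet P ω p x : Finset _) :
        Set (EuclideanSpace ℝ (Fin d)))) ≤ n →
      ∃ y ∈ vorCell P ω p, eqSet P ω p x ⊆ eqSet P ω p y ∧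
        finrank ℝ (vectorSpan ℝ ((eqSet P ω p y : Finset _) :
          Set (EuclideanSpace ℝ (Fin d)))) = d := by
  intro n
  induction n with
  | zero =>
    intro x hx h0
    refine ⟨x, hx, Finset.Subset.refl _, ?_⟩
    have hle : finrank ℝ (vectorSpan ℝ ((eqSet P ω p x : Finset _) :
        Set (EuclideanSpace ℝ (Fin d)))) ≤ d := by
      have := Submodule.finrank_le (vectorSpan ℝ ((eqSet P ω p x : Finset _) :
        Set (EuclideanSpace ℝ (Fin d))))
      rwa [finrank_euclideanSpace_fin] at this
    omega
  | succ n ih =>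
    intro x hx hn
    have hle : finrank ℝ (vectorSpan ℝ ((eqSet P ω p x : Finset _) :
        Set (EuclideanSpace ℝ (Fin d)))) ≤ d := by
      have := Submodule.finrank_le (vectorSpan ℝ ((eqSet P ω p x : Finset _) :
        Set (EuclideanSpace ℝ (Fin d))))
      rwa [finrank_euclideanSpace_fin] at this
    rcases eq_or_lt_of_le hle with heq | hlt
    · exact ⟨x, hx, Finset.Subset.refl _, heq⟩
    · obtain ⟨x', hx', hsub, hrank⟩ := step_lemma hp hbdd hx hlt
      obtain ⟨y, hy, hsub', hrk⟩ := ih x' hx' (by omega)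
      exact ⟨y, hy, hsub.trans hsub', hrk⟩

theorem maximal_simplices
    (d : ℕ) (P : Finset (EuclideanSpace ℝ (Fin d)))
    (ω : EuclideanSpace ℝ (Fin d) → ℝ) (hω : ∀ q ∈ P, 0 ≤ ω q)
    (p : EuclideanSpace ℝ (Fin d)) (hp : p ∈ P)
    (hbdd : Bornology.IsBounded (vorCell P ω p))
    (σ : Finset (EuclideanSpace ℝ (Fin d))) (hσP : σ ⊆ P) (hpσ : p ∈ σ)
    (hne : (vorFace P ω σ).Nonempty) :
    ∃ σ' : Finset (EuclideanSpace ℝ (Fin d)), σ' ⊆ P ∧ σ ⊆ σ' ∧ p ∈ σ' ∧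
      (vorFace P ω σ').Nonempty ∧
      Module.finrank ℝ (affineSpan ℝ (σ' : Set (EuclideanSpace ℝ (Fin d)))).direction = d := by
  obtain ⟨x, hx⟩ := hne
  simp only [vorFace, Set.mem_iInter] at hx
  have hxp : x ∈ vorCell P ω p := hx p hpσ
  have hσsub : σ ⊆ eqSet P ω p x := by
    intro q hq
    rw [eqSet, Finset.mem_filter]
    refine ⟨hσP hq, le_antisymm ?_ ?_⟩
    · exact hx q hq p hp
    · exact hxp q (hσP hq)
  obtain ⟨y, hy, hsub, hrk⟩ := reach_full hp hbdd d x hxp (Nat.sub_le _ _)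
  refine ⟨eqSet P ω p y, Finset.filter_subset _ _, hσsub.trans hsub, hsub (p_mem_eqSet hp x),
    ⟨y, mem_vorFace_eqSet hy⟩, ?_⟩
  rw [direction_affineSpan]
  exact hrk
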